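/- arXiv:1210.6825 — 2 statements merged into one kernel-verified Lean document; each statement's English description precedes it below -/
import Mathlib

section
/- Let A be a real n×n matrix such that trace(A) ≠ 0, let M = exp(sA) for some s ≠ 0, let 1 ≤ p < ∞, and let c = |det M|^{1/p}. If φ ∈ L^p(ℝⁿ) satisfies φ(v) = c · φ(Mv) for almost every v ∈ ℝⁿ, then φ = 0 almost everywhere. -/
open Matrix NormedSpace

section DetExp

variable {m : ℕ}

attribute [local instance] Matrix.linftyOpNormedAddCommGroup Matrix.linftyOpNormedRing
  Matrix.linftyOpNormedAlgebra

private noncomputable def entryCLM (i j : Fin m) :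
    Matrix (Fin m) (Fin m) ℝ →L[ℝ] ℝ :=
  LinearMap.toContinuousLinearMap
    ((LinearMap.proj j ∘ₗ LinearMap.proj (R := ℝ) (φ := fun _ : Fin m => Fin m → ℝ) i :
      Matrix (Fin m) (Fin m) ℝ →ₗ[ℝ] ℝ))

private theorem hasDerivAt_det_exp_zero (B : Matrix (Fin m) (Fin m) ℝ) :
    HasDerivAt (fun t : ℝ => (exp (t • B)).det) B.trace 0 := by
  have hE : HasDerivAt (fun u : ℝ => exp (u • B)) B 0 := by
    have h := hasDerivAt_exp_smul_const (𝕂 := ℝ) B 0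
    simp only [zero_smul, NormedSpace.exp_zero, one_mul] at h
    exact h
  have hEntry : ∀ i j : Fin m, HasDerivAt (fun u : ℝ => exp (u • B) i j) (B i j) 0 := by
    intro i j
    have := (entryCLM i j).hasFDerivAt.comp_hasDerivAt 0 hE
    exact this
  have hP : ∀ σ : Equiv.Perm (Fin m),
      HasDerivAt (fun u : ℝ => ∏ i, exp (u • B) (σ i) i)
        (∑ i, (∏ j ∈ Finset.univ.erase i, (1 : Matrix (Fin m) (Fin m) ℝ) (σ j) j) • B (σ i) i)
        0 := by
    intro σ
    have := HasDerivAt.finset_prod (u := Finset.univ)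
      (f := fun i (u : ℝ) => exp (u • B) (σ i) i) (f' := fun i => B (σ i) i)
      (x := 0) (fun i _ => hEntry (σ i) i)
    simpa [Finset.prod_fn] using this
  have hdet : HasDerivAt (fun t : ℝ => (exp (t • B)).det)
      (∑ σ : Equiv.Perm (Fin m), (Equiv.Perm.sign σ : ℝ) *
        (∑ i, (∏ j ∈ Finset.univ.erase i, (1 : Matrix (Fin m) (Fin m) ℝ) (σ j) j) • B (σ i) i))
      0 := by
    have : (fun t : ℝ => (exp (t • B)).det) =
        fun t : ℝ => ∑ σ : Equiv.Perm (Fin m),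
          (Equiv.Perm.sign σ : ℝ) * ∏ i, exp (t • B) (σ i) i := by
      funext t
      rw [Matrix.det_apply']
    rw [this]
    have h := HasDerivAt.sum (u := Finset.univ) fun σ _ => (hP σ).const_mul (Equiv.Perm.sign σ : ℝ)
    rw [Finset.sum_fn] at h
    exact h
  convert hdet using 1
  rw [Finset.sum_eq_single (1 : Equiv.Perm (Fin m))]
  · have h1 : ∀ x : Fin m, (∏ j ∈ Finset.univ.erase x,
        (1 : Matrix (Fin m) (Fin m) ℝ) ((1 : Equiv.Perm (Fin m)) j) j) = 1 :=
      fun x => Finset.prod_eq_one fun j _ => by rw [Equiv.Perm.one_apply]; exact Matrix.one_apply_eq j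
    simp [Matrix.trace, Matrix.diag, h1]
  · intro σ _ hσ
    obtain ⟨k, hk⟩ : ∃ k, σ k ≠ k := by
      by_contra h
      push_neg at h
      exact hσ (Equiv.ext fun x => h x)
    have hprod : ∀ i : Fin m,
        (∏ j ∈ Finset.univ.erase i, (1 : Matrix (Fin m) (Fin m) ℝ) (σ j) j) = 0 := by
      intro i
      rcases eq_or_ne k i with rfl | hki
      · have h1 : σ⁻¹ k ≠ k := by
          intro h
          have h2 := congrArg σ h
          rw [← Equiv.Perm.mul_apply, mul_inv_cancel, Equiv.Perm.one_apply] at h2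
          exact hk h2.symm
        refine Finset.prod_eq_zero (i := σ⁻¹ k) ?_ ?_
        · exact Finset.mem_erase.2 ⟨h1, Finset.mem_univ _⟩
        · rw [← Equiv.Perm.mul_apply, mul_inv_cancel, Equiv.Perm.one_apply]
          exact Matrix.one_apply_ne (Ne.symm h1)
      · refine Finset.prod_eq_zero (i := k) ?_ ?_
        · exact Finset.mem_erase.2 ⟨hki, Finset.mem_univ _⟩
        · exact Matrix.one_apply_ne hk
    rw [Finset.sum_eq_zero fun i _ => by rw [hprod i, zero_smul], mul_zero]
  · intro h
    exact absurd (Finset.mem_univ _) h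

private theorem det_exp_smul (B : Matrix (Fin m) (Fin m) ℝ) (t : ℝ) :
    (exp (t • B)).det = Real.exp (t * B.trace) := by
  set f : ℝ → ℝ := fun t => (exp (t • B)).det with hf
  have hmul : ∀ a b : ℝ, f (a + b) = f a * f b := by
    intro a b
    simp only [hf]
    rw [add_smul, Matrix.exp_add_of_commute _ _
      (((Commute.refl B).smul_left a).smul_right b), Matrix.det_mul]
  have hderiv : ∀ t : ℝ, HasDerivAt f (B.trace * f t) t := by
    intro t
    have h1 : HasDerivAt (fun h : ℝ => f t * f h) (f t * B.trace) 0 :=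
      (hasDerivAt_det_exp_zero B).const_mul (f t)
    have h2 : HasDerivAt (fun h : ℝ => f (t + h)) (f t * B.trace) 0 := by
      have he : (fun h : ℝ => f (t + h)) = fun h : ℝ => f t * f h := funext fun h => hmul t h
      rw [he]; exact h1
    have h2' : HasDerivAt (fun h : ℝ => f (t + h)) (f t * B.trace) (t + -t) := by
      rw [add_neg_cancel]; exact h2
    have h3 : HasDerivAt (fun x : ℝ => f (t + (x + -t))) (f t * B.trace) t :=
      h2'.comp_add_const t (-t)
    have h4 : (fun x : ℝ => f (t + (x + -t))) = f := funext fun x => congrArg f (by ring)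
    rw [h4, mul_comm] at h3
    exact h3
  have hF : ∀ u : ℝ, HasDerivAt (fun u : ℝ => f u * Real.exp (-(u * B.trace))) 0 u := by
    intro u
    have he : HasDerivAt (fun u : ℝ => Real.exp (-(u * B.trace)))
        (Real.exp (-(u * B.trace)) * -(1 * B.trace)) u :=
      (Real.hasDerivAt_exp _).comp u (((hasDerivAt_id u).mul_const B.trace).neg)
    have hm := (hderiv u).mul he
    refine hm.congr_deriv ?_
    ring
  have hconst : ∀ u : ℝ, f u * Real.exp (-(u * B.trace)) = f 0 * Real.exp (-(0 * B.trace)) :=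
    fun u => is_const_of_deriv_eq_zero (fun x => (hF x).differentiableAt)
      (fun x => (hF x).deriv) u 0
  have h0 : f 0 = 1 := by simp [hf]
  have hone := hconst t
  rw [h0] at hone
  simp only [zero_mul, neg_zero, Real.exp_zero, mul_one, one_mul] at hone
  have h5 := congrArg (fun y => y * Real.exp (t * B.trace)) hone
  simpa [mul_assoc, ← Real.exp_add] using h5

end DetExp

section Measure

open MeasureTheory Filter Topology
open scoped ENNReal

variable {m : ℕ}

private theorem measurable_toLin' (N : Matrix (Fin m) (Fin m) ℝ) :
    Measurable (⇑(Matrix.toLin' N)) :=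
  (LinearMap.continuous_of_finiteDimensional _).measurable

private theorem qmp_mulVec (N : Matrix (Fin m) (Fin m) ℝ) (hd : N.det ≠ 0) :
    Measure.QuasiMeasurePreserving (⇑(Matrix.toLin' N)) volume volume := by
  refine ⟨measurable_toLin' N, ?_⟩
  rw [Real.map_matrix_volume_pi_eq_smul_volume_pi hd]
  refine Measure.AbsolutelyContinuous.mk fun s _ h0 => ?_
  simp [h0]

private theorem key_zero (N : Matrix (Fin m) (Fin m) ℝ)
    (hd0 : N.det ≠ 0) (hd1 : |N.det| < 1)
    (g : (Fin m → ℝ) → ℝ≥0∞) (hg : Measurable g) (hint : ∫⁻ v, g v ∂volume ≠ ⊤)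
    (hrel : ∀ᵐ v ∂volume, g v = ENNReal.ofReal |N.det| * g (N.mulVec v)) :
    ∀ᵐ v ∂volume, g v = 0 := by
  have hd0' : N⁻¹.det ≠ 0 := by
    rw [Matrix.det_nonsing_inv, Ring.inverse_eq_inv]
    exact inv_ne_zero hd0
  have habs : (0:ℝ) < |N.det| := abs_pos.2 hd0
  set T : (Fin m → ℝ) → (Fin m → ℝ) := ⇑(Matrix.toLin' N) with hT
  set T' : (Fin m → ℝ) → (Fin m → ℝ) := ⇑(Matrix.toLin' N⁻¹) with hT'
  have hTm : Measurable T := measurable_toLin' N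
  have hTm' : Measurable T' := measurable_toLin' N⁻¹
  have hmapN : Measure.map T volume = ENNReal.ofReal |N.det⁻¹| • volume :=
    Real.map_matrix_volume_pi_eq_smul_volume_pi hd0
  have hmapN' : Measure.map T' volume = ENNReal.ofReal |N.det| • volume := by
    have := Real.map_matrix_volume_pi_eq_smul_volume_pi hd0'
    rw [Matrix.det_nonsing_inv, Ring.inverse_eq_inv, inv_inv] at this
    exact this
  have hTT' : ∀ v, T' (T v) = v := by
    intro v
    simp only [hT, hT', Matrix.toLin'_apply]
    rw [Matrix.mulVec_mulVec, Matrix.nonsing_inv_mul N (isUnit_iff_ne_zero.2 hd0),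
      Matrix.one_mulVec]
  have stepI : ∀ s : Set (Fin m → ℝ), MeasurableSet s →
      ∫⁻ v in T ⁻¹' s, g v = ∫⁻ v in s, g v := by
    intro s hs
    have h1 : ∫⁻ v in T ⁻¹' s, g v
        = ENNReal.ofReal |N.det| * ∫⁻ v in T ⁻¹' s, g (T v) := by
      have ha : ∫⁻ v in T ⁻¹' s, g v
          = ∫⁻ v in T ⁻¹' s, ENNReal.ofReal |N.det| * g (T v) := by
        refine lintegral_congr_ae (ae_restrict_of_ae ?_)
        filter_upwards [hrel] with v hv
        rw [hv]
        simp only [hT, Matrix.toLin'_apply]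
      rw [ha, lintegral_const_mul (f := fun v => g (T v)) _ (hg.comp hTm)]
    have h2 : ∫⁻ v in T ⁻¹' s, g (T v) = ∫⁻ y in s, g y ∂(Measure.map T volume) :=
      (setLIntegral_map hs hg hTm).symm
    rw [h1, h2, hmapN, Measure.restrict_smul, lintegral_smul_measure, smul_eq_mul, ← mul_assoc,
      ← ENNReal.ofReal_mul (abs_nonneg _), abs_inv, mul_inv_cancel₀ (abs_ne_zero.2 hd0),
      ENNReal.ofReal_one, one_mul]
  have stepI' : ∀ s : Set (Fin m → ℝ), MeasurableSet s →
      ∫⁻ v in T' ⁻¹' s, g v = ∫⁻ v in s, g v := by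
    intro s hs
    have h1 := stepI (T' ⁻¹' s) (hTm' hs)
    have h2 : T ⁻¹' (T' ⁻¹' s) = s := by
      ext v
      simp [Set.mem_preimage, hTT' v]
    rw [h2] at h1
    exact h1.symm
  have main : ∀ E : Set (Fin m → ℝ), MeasurableSet E → volume E ≠ ⊤ →
      ∫⁻ v in E, g v = 0 := by
    intro E hE hEfin
    set S : ℕ → Set (Fin m → ℝ) := fun k => T'^[k] ⁻¹' E with hS
    have hTm'k : ∀ k, Measurable (T'^[k]) := by
      intro k
      induction k with
      | zero => exact measurable_id
      | succ k ih => rw [Function.iterate_succ]; exact ih.comp hTm'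
    have hSmeas : ∀ k, MeasurableSet (S k) := fun k => (hTm'k k) hE
    have hSsucc : ∀ k, S (k + 1) = T' ⁻¹' (S k) := by
      intro k
      simp only [hS, Function.iterate_succ, Set.preimage_comp]
    have hSint : ∀ k, ∫⁻ v in S k, g v = ∫⁻ v in E, g v := by
      intro k
      induction k with
      | zero => simp [hS]
      | succ k ih => rw [hSsucc k, stepI' _ (hSmeas k), ih]
    have hSvol : ∀ k, volume (S k) = (ENNReal.ofReal |N.det|) ^ k * volume E := by
      intro k
      induction k with
      | zero => simp [hS]
      | succ k ih =>
        have : volume (S (k+1)) = ENNReal.ofReal |N.det| * volume (S k) := by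
          rw [hSsucc k, ← Measure.map_apply hTm' (hSmeas k), hmapN']
          simp [Measure.smul_apply]
        rw [this, ih, pow_succ]
        ring
    have hd1' : ENNReal.ofReal |N.det| < 1 := by
      rw [← ENNReal.ofReal_one]
      exact (ENNReal.ofReal_lt_ofReal_iff one_pos).2 hd1
    have hlim : Tendsto (fun k => volume (S k)) atTop (𝓝 0) := by
      have h0 : Tendsto (fun k : ℕ => (ENNReal.ofReal |N.det|) ^ k * volume E)
          atTop (𝓝 (0 * volume E)) :=
        ENNReal.Tendsto.mul_const
          (ENNReal.tendsto_pow_atTop_nhds_zero_of_lt_one hd1') (Or.inr hEfin)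
      rw [zero_mul] at h0
      simpa only [hSvol] using h0
    have hzero := tendsto_setLIntegral_zero hint hlim
    have hconst : Tendsto (fun k => ∫⁻ v in S k, g v) atTop (𝓝 (∫⁻ v in E, g v)) := by
      simp only [hSint]
      exact tendsto_const_nhds
    exact tendsto_nhds_unique hconst hzero
  have hball : ∀ k : ℕ, ∀ᵐ v ∂volume, v ∈ Metric.ball (0 : Fin m → ℝ) k → g v = 0 := by
    intro k
    exact (setLIntegral_eq_zero_iff Metric.isOpen_ball.measurableSet hg).1
      (main _ Metric.isOpen_ball.measurableSet (measure_ball_lt_top).ne)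
  have hAll : ∀ᵐ v ∂volume, ∀ k : ℕ, v ∈ Metric.ball (0 : Fin m → ℝ) k → g v = 0 :=
    (ae_all_iff).2 hball
  filter_upwards [hAll] with v hv
  obtain ⟨k, hk⟩ := exists_nat_gt ‖v‖
  exact hv k (mem_ball_zero_iff.2 hk)

end Measure

open MeasureTheory Matrix
open scoped ENNReal
/-- if `trace A ≠ 0`, `M = exp (s • A)` with `s ≠ 0`,
`c = |det M| ^ (1/p)` and `φ ∈ L^p` satisfies `φ v = c * φ (M v)` a.e.,
then `φ = 0` a.e. -/
theorem eq_zero_of_self_similar_Lp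
    {n : ℕ} (A : Matrix (Fin n) (Fin n) ℝ) (htr : A.trace ≠ 0)
    (s : ℝ) (hs : s ≠ 0) (M : Matrix (Fin n) (Fin n) ℝ)
    (hM : M = NormedSpace.exp (s • A))
    (p : ℝ≥0∞) (hp1 : 1 ≤ p) (hp2 : p ≠ ⊤)
    (c : ℝ) (hc : c = |M.det| ^ (1 / p.toReal))
    (φ : (Fin n → ℝ) → ℂ) (hφ : MemLp φ p volume)
    (heq : ∀ᵐ v : Fin n → ℝ ∂volume, φ v = (c : ℂ) * φ (M.mulVec v)) :
    φ =ᵐ[volume] 0 := by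
  classical
  set q := p.toReal with hq
  have hp0 : p ≠ 0 := (zero_lt_one.trans_le hp1).ne'
  have hq0 : 0 < q := ENNReal.toReal_pos hp0 hp2
  -- determinant facts
  have hdet : M.det = Real.exp (s * A.trace) := by
    rw [hM, det_exp_smul]
  have hdpos : 0 < M.det := hdet ▸ Real.exp_pos _
  have hdet0 : M.det ≠ 0 := hdpos.ne'
  have hdne1 : M.det ≠ 1 := by
    rw [hdet]
    intro h
    exact mul_ne_zero hs htr ((Real.exp_eq_one_iff _).1 h)
  -- c facts
  have hcpos : 0 < c := by
    rw [hc]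
    exact Real.rpow_pos_of_pos (abs_pos.2 hdet0) _
  -- measurable representative of φ
  set φ₀ := hφ.1.mk φ with hφ₀
  have hφ₀m : StronglyMeasurable φ₀ := hφ.1.stronglyMeasurable_mk
  have hφeq : φ =ᵐ[volume] φ₀ := hφ.1.ae_eq_mk
  set g : (Fin n → ℝ) → ℝ≥0∞ := fun v => (‖φ₀ v‖₊ : ℝ≥0∞) ^ q with hgdef
  have hgmeas : Measurable g := by
    have h1 : Measurable fun v => (‖φ₀ v‖₊ : ℝ≥0∞) :=
      hφ₀m.measurable.nnnorm.coe_nnreal_ennreal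
    exact h1.pow_const q
  have hint : ∫⁻ v, g v ∂volume ≠ ⊤ := by
    have h2 := hφ.2
    rw [eLpNorm_eq_lintegral_rpow_enorm_toReal hp0 hp2] at h2
    have h3 : ∫⁻ v, (‖φ v‖₊ : ℝ≥0∞) ^ q ∂volume = ∫⁻ v, g v ∂volume := by
      refine lintegral_congr_ae ?_
      filter_upwards [hφeq] with v hv
      rw [hgdef, hv]
    have h4 : (∫⁻ v, g v ∂volume) ^ (1 / q) < ⊤ := by
      rw [← h3]
      exact h2
    by_contra hcon
    rw [hcon, ENNReal.top_rpow_of_pos (by positivity)] at h4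
    exact lt_irrefl _ h4
  -- the scaling relation for g
  have hcq : (ENNReal.ofReal c) ^ q = ENNReal.ofReal M.det := by
    rw [ENNReal.ofReal_rpow_of_pos hcpos, hc, abs_of_pos hdpos, ← Real.rpow_mul hdpos.le,
      one_div_mul_cancel hq0.ne', Real.rpow_one]
  have hqmpM := qmp_mulVec M hdet0
  have hcompM : (fun v => φ (M.mulVec v)) =ᵐ[volume] fun v => φ₀ (M.mulVec v) := by
    have := hqmpM.ae_eq hφeq
    simpa only [Function.comp_def, Matrix.toLin'_apply] using this
  have hrel0 : ∀ᵐ v ∂volume, g v = ENNReal.ofReal M.det * g (M.mulVec v) := by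
    filter_upwards [heq, hφeq, hcompM] with v h1 h2 h3
    rw [hgdef]
    simp only
    have hcc : (‖(c:ℂ)‖₊ : ℝ≥0∞) = ENNReal.ofReal c := by
      rw [Complex.nnnorm_real, Real.nnnorm_of_nonneg hcpos.le, ENNReal.ofReal,
        Real.toNNReal_of_nonneg hcpos.le]
    rw [← h2, ← h3, h1, nnnorm_mul, ENNReal.coe_mul,
      ENNReal.mul_rpow_of_nonneg _ _ hq0.le, hcc, hcq]
  -- conclude that g = 0 a.e.
  have hg0 : ∀ᵐ v ∂volume, g v = 0 := by
    rcases lt_or_gt_of_ne hdne1 with hlt | hgt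
    · refine key_zero M hdet0 ?_ g hgmeas hint ?_
      · rwa [abs_of_pos hdpos]
      · simpa only [abs_of_pos hdpos] using hrel0
    · have hdet0' : M⁻¹.det ≠ 0 := by
        rw [Matrix.det_nonsing_inv, Ring.inverse_eq_inv]
        exact inv_ne_zero hdet0
      have hinvdet : M⁻¹.det = (M.det)⁻¹ := by
        rw [Matrix.det_nonsing_inv, Ring.inverse_eq_inv]
      have hMM : ∀ v, M.mulVec (M⁻¹.mulVec v) = v := by
        intro v
        rw [Matrix.mulVec_mulVec, Matrix.mul_nonsing_inv M (isUnit_iff_ne_zero.2 hdet0),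
          Matrix.one_mulVec]
      have htrans : ∀ᵐ v ∂volume,
          g (M⁻¹.mulVec v) = ENNReal.ofReal M.det * g (M.mulVec (M⁻¹.mulVec v)) := by
        have := (qmp_mulVec M⁻¹ hdet0').ae hrel0
        simpa only [Matrix.toLin'_apply] using this
      have hrel' : ∀ᵐ v ∂volume,
          g v = ENNReal.ofReal |M⁻¹.det| * g (M⁻¹.mulVec v) := by
        filter_upwards [htrans] with v hv
        rw [hMM v] at hv
        rw [hv, hinvdet, abs_of_pos (inv_pos.2 hdpos), ← mul_assoc,
          ← ENNReal.ofReal_mul (inv_nonneg.2 hdpos.le), inv_mul_cancel₀ hdet0,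
          ENNReal.ofReal_one, one_mul]
      refine key_zero M⁻¹ hdet0' ?_ g hgmeas hint hrel'
      rw [hinvdet, abs_of_pos (inv_pos.2 hdpos)]
      exact inv_lt_one_of_one_lt₀ hgt
  -- conclude φ = 0 a.e.
  filter_upwards [hg0, hφeq] with v h1 h2
  have h3 : (‖φ₀ v‖₊ : ℝ≥0∞) = 0 := by
    by_contra hne
    have := ENNReal.rpow_pos (p := q) (pos_iff_ne_zero.2 hne) ENNReal.coe_ne_top
    rw [hgdef] at h1
    simp only at h1
    rw [h1] at this
    exact lt_irrefl _ this
  have h4 : ‖φ₀ v‖₊ = 0 := by exact_mod_cast h3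
  rw [Pi.zero_apply, h2, ← norm_eq_zero, ← coe_nnnorm, h4, NNReal.coe_zero]
end

section
/- Let g : ℝ → ℂ be a measurable function, not a.e. zero, that vanishes outside a compact set. Then g has linearly independent translates: if Σ_{k=1}^m c_k g(x + t_k) = 0 for a.e. x ∈ ℝ with t₁ < t₂ < ⋯ < t_m distinct, then c₁ = ⋯ = c_m = 0. -/
open MeasureTheory

/-- a measurable function on `ℝ`, not a.e. zero, vanishing outside
a compact set, has linearly independent translates. -/
theorem linearIndependent_translates_of_compact_support
    {m : ℕ} (g : ℝ → ℂ) (hmeas : Measurable g) (hne : ¬ g =ᵐ[volume] 0)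
    (hsupp : ∃ K : Set ℝ, IsCompact K ∧ ∀ x ∉ K, g x = 0)
    (t : Fin m → ℝ) (ht : Function.Injective t) (c : Fin m → ℂ)
    (heq : ∀ᵐ x : ℝ ∂volume, ∑ k, c k * g (x + t k) = 0) :
    c = 0 := by
  by_contra hc
  set A : Set ℝ := {x | g x ≠ 0} with hA
  have hAmeas : MeasurableSet A := (hmeas (measurableSet_singleton 0)).compl
  have hApos : 0 < volume A := by
    rw [pos_iff_ne_zero]
    intro h
    refine hne ?_
    have : ∀ᵐ x ∂volume, g x = 0 := by rw [ae_iff]; exact h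
    filter_upwards [this] with x hx using hx
  obtain ⟨K, hK, hKsupp⟩ := hsupp
  have hAK : A ⊆ K := fun x hx => by
    by_contra h; exact hx (hKsupp x h)
  obtain ⟨B, hB⟩ := hK.isBounded.subset_ball 0
  have hAball : A ⊆ Set.Ioo (-B) B := by
    intro x hx
    have := hB (hAK hx)
    rw [Metric.mem_ball, Real.dist_eq, sub_zero, abs_lt] at this
    exact ⟨by linarith [this.1], this.2⟩
  -- the set of levels above which A is null
  set S : Set ℝ := {y | volume (A ∩ Set.Ioi y) = 0} with hS
  have hSne : S.Nonempty := by
    refine ⟨B, measure_mono_null (fun x hx => ?_) measure_empty⟩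
    exact absurd (hAball hx.1).2 (not_lt.mpr (le_of_lt hx.2))
  have hSbdd : BddBelow S := by
    refine ⟨-B, fun y hy => ?_⟩
    by_contra h
    push_neg at h
    have : A ∩ Set.Ioi y = A := by
      ext x; exact ⟨fun h => h.1, fun hx => ⟨hx, lt_trans h (hAball hx).1⟩⟩
    have hy' : volume (A ∩ Set.Ioi y) = 0 := hy
    rw [this] at hy'
    exact absurd hy' hApos.ne'
  set M : ℝ := sInf S with hM
  have hSup : ∀ y y' : ℝ, y ∈ S → y ≤ y' → y' ∈ S := fun y y' hy hle =>
    measure_mono_null (Set.inter_subset_inter_right _ (Set.Ioi_subset_Ioi hle)) hy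
  have hgt : ∀ y, M < y → y ∈ S := by
    intro y hy
    obtain ⟨z, hz, hzy⟩ := exists_lt_of_csInf_lt hSne hy
    exact hSup z y hz hzy.le
  have hlt : ∀ y, y < M → 0 < volume (A ∩ Set.Ioi y) := by
    intro y hy
    rw [pos_iff_ne_zero]
    intro h
    exact absurd (csInf_le hSbdd h) (not_le.mpr hy)
  have hMnull : volume (A ∩ Set.Ioi M) = 0 := by
    have : A ∩ Set.Ioi M ⊆ ⋃ n : ℕ, A ∩ Set.Ioi (M + 1 / (n + 1)) := by
      intro x hx
      obtain ⟨n, hn⟩ := exists_nat_one_div_lt (sub_pos.mpr (Set.mem_Ioi.mp hx.2))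
      exact Set.mem_iUnion.mpr ⟨n, hx.1, by simp only [Set.mem_Ioi]; linarith⟩
    refine measure_mono_null this (measure_iUnion_null fun n => hgt _ ?_)
    have : (0:ℝ) < 1 / (n + 1) := by positivity
    linarith
  have hMnull' : volume (A ∩ Set.Ici M) = 0 := by
    refine measure_mono_null (fun x hx => ?_)
      (measure_union_null hMnull (measure_singleton M))
    rcases eq_or_lt_of_le (Set.mem_Ici.mp hx.2) with h | h
    · exact Or.inr h.symm
    · exact Or.inl ⟨hx.1, h⟩
  -- active indices
  set s : Finset (Fin m) := Finset.univ.filter (fun k => c k ≠ 0) with hs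
  have hsne : s.Nonempty := by
    rcases Function.ne_iff.mp hc with ⟨k, hk⟩
    exact ⟨k, by simp only [hs, Finset.mem_filter, Finset.mem_univ, true_and]; simpa using hk⟩
  obtain ⟨k0, hk0s, hk0min⟩ := s.exists_min_image t hsne
  have hck0 : c k0 ≠ 0 := by simpa [hs] using hk0s
  obtain ⟨δ, hδpos, hδ⟩ : ∃ δ > 0, ∀ k ∈ s, k ≠ k0 → t k0 + δ ≤ t k := by
    rcases (s.erase k0).eq_empty_or_nonempty with he | he
    · exact ⟨1, one_pos, fun k hk hkne =>
        absurd (Finset.mem_erase.mpr ⟨hkne, hk⟩) (by simp [he])⟩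
    · set e := (s.erase k0).image (fun k => t k - t k0) with he'
      have hene : e.Nonempty := he.image _
      refine ⟨e.min' hene, ?_, ?_⟩
      · obtain ⟨k, hk, hkeq⟩ := Finset.mem_image.mp (e.min'_mem hene)
        rw [← hkeq]
        have hkne := (Finset.mem_erase.mp hk).1
        have hks := (Finset.mem_erase.mp hk).2
        have := hk0min k hks
        rcases eq_or_lt_of_le this with h | h
        · exact absurd (ht h).symm hkne
        · linarith
      · intro k hk hkne
        have : t k - t k0 ∈ e := Finset.mem_image.mpr ⟨k, Finset.mem_erase.mpr ⟨hkne, hk⟩, rfl⟩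
        have := e.min'_le _ this
        linarith
  -- the critical set
  set E : Set ℝ := (fun x => x + t k0) ⁻¹' (A ∩ Set.Ioo (M - δ) M) with hE
  have hEpos : 0 < volume E := by
    rw [hE, measure_preimage_add_right]
    have key : volume (A ∩ Set.Ioi (M - δ)) ≤
        volume (A ∩ Set.Ioo (M - δ) M) + volume (A ∩ Set.Ici M) := by
      refine le_trans (measure_mono fun x hx => ?_) (measure_union_le _ _)
      rcases lt_or_ge x M with h | h
      · exact Or.inl ⟨hx.1, hx.2, h⟩
      · exact Or.inr ⟨hx.1, h⟩
    rw [hMnull', add_zero] at key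
    exact lt_of_lt_of_le (hlt _ (by linarith)) key
  have hEnull : volume E = 0 := by
    have hnullk : ∀ k : Fin m, volume ((fun x => x + t k) ⁻¹' (A ∩ Set.Ioi M)) = 0 := by
      intro k; rw [measure_preimage_add_right]; exact hMnull
    have hN : volume {x : ℝ | ¬ (∑ k, c k * g (x + t k) = 0)} = 0 := by
      rw [← ae_iff]; exact heq
    refine measure_mono_null (fun x hx => ?_)
      (measure_union_null hN (measure_iUnion_null hnullk))
    by_contra hmem
    push_neg at hmem
    rw [Set.mem_union, not_or] at hmem
    obtain ⟨hx1, hx2⟩ := hmem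
    simp only [Set.mem_setOf_eq, not_not] at hx1
    have hxE : x + t k0 ∈ A ∧ M - δ < x + t k0 ∧ x + t k0 < M := hx
    -- for active k ≠ k0, g (x + t k) = 0
    have hzero : ∀ k ∈ s, k ≠ k0 → g (x + t k) = 0 := by
      intro k hk hkne
      by_contra hg
      have hmemk : x ∈ (fun x => x + t k) ⁻¹' (A ∩ Set.Ioi M) := by
        refine ⟨hg, ?_⟩
        have := hδ k hk hkne
        simp only [Set.mem_Ioi]
        have := hxE.2.1
        linarith
      exact hx2 (Set.mem_iUnion.mpr ⟨k, hmemk⟩)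
    have hsum : ∑ k, c k * g (x + t k) = c k0 * g (x + t k0) := by
      rw [← Finset.sum_filter_add_sum_filter_not Finset.univ (fun k => c k ≠ 0)]
      have h1 : ∑ k ∈ Finset.univ.filter (fun k => ¬ c k ≠ 0), c k * g (x + t k) = 0 := by
        refine Finset.sum_eq_zero fun k hk => ?_
        simp only [Finset.mem_filter, not_not] at hk
        rw [hk.2, zero_mul]
      rw [h1, add_zero]
      rw [Finset.sum_eq_single_of_mem k0 hk0s]
      intro k hk hkne
      rw [hzero k hk hkne, mul_zero]
    rw [hsum] at hx1
    exact hxE.1 ((mul_eq_zero.mp hx1).resolve_left hck0)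
  exact absurd hEnull hEpos.ne'
end
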